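/- arXiv:2505.18187 — 3 statements merged into one kernel-verified Lean document; each statement's English description precedes it below -/
import Mathlib

section
/- For square matrices A and B of size n, and t ≥ 0, the matrix exponential of the 2n×2n block upper-triangular matrix Ξ = [[A, B], [0, A']] times t (where A' is any n×n matrix) has block form [[exp(At), G(t)], [0, exp(A't)]], where G(t) = ∫₀ᵗ exp(A(t−s)) · B · exp(A's) ds. -/
open Matrix

namespace VanLoanAux

open scoped Matrix.Norms.Operator

open NormedSpace

noncomputable section

variable {n : ℕ} {m : Type*} [Fintype m] [DecidableEq m]

lemma expCont (A : Matrix m m ℝ) :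
    Continuous fun s : ℝ => exp (s • A) :=
  continuous_iff_continuousAt.2 fun s => (hasDerivAt_exp_smul_const A s).continuousAt

lemma expNegCancel (A : Matrix m m ℝ) (u v : ℝ) :
    exp (u • A) * exp (v • A) = exp ((u + v) • A) := by
  rw [← Matrix.exp_add_of_commute _ _ (((Commute.refl A).smul_left u).smul_right v), ← add_smul]

/-- the integrand for the kernel -/
def F (A B A' : Matrix (Fin n) (Fin n) ℝ) (s : ℝ) : Matrix (Fin n) (Fin n) ℝ :=
  exp ((-s) • A) * B * exp (s • A')

lemma contF (A B A' : Matrix (Fin n) (Fin n) ℝ) : Continuous (F A B A') :=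
  (((expCont A).comp continuous_neg).mul continuous_const).mul (expCont A')

/-- the kernel -/
def K (A B A' : Matrix (Fin n) (Fin n) ℝ) (t : ℝ) : Matrix (Fin n) (Fin n) ℝ :=
  ∫ s in (0:ℝ)..t, F A B A' s

lemma hasDerivAt_K (A B A' : Matrix (Fin n) (Fin n) ℝ) (t : ℝ) :
    HasDerivAt (K A B A') (F A B A' t) t :=
  intervalIntegral.integral_hasDerivAt_right
    ((contF A B A').intervalIntegrable _ _)
    ((show @Continuous _ _ _ PseudoMetricSpace.toUniformSpace.toTopologicalSpace (F A B A') from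
      contF A B A').stronglyMeasurable.stronglyMeasurableAtFilter)
    (contF A B A').continuousAt

/-- the linear map assembling blocks -/
def Lblk : (Matrix (Fin n) (Fin n) ℝ ×
      (Matrix (Fin n) (Fin n) ℝ × Matrix (Fin n) (Fin n) ℝ)) →ₗ[ℝ]
    Matrix (Fin n ⊕ Fin n) (Fin n ⊕ Fin n) ℝ where
  toFun p := Matrix.fromBlocks p.1 p.2.1 0 p.2.2
  map_add' p q := by
    simp [Matrix.fromBlocks_add]
  map_smul' c p := by
    simp [Matrix.fromBlocks_smul]

def LblkC : (Matrix (Fin n) (Fin n) ℝ ×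
      (Matrix (Fin n) (Fin n) ℝ × Matrix (Fin n) (Fin n) ℝ)) →L[ℝ]
    Matrix (Fin n ⊕ Fin n) (Fin n ⊕ Fin n) ℝ :=
  LinearMap.toContinuousLinearMap Lblk

/-- the candidate for `exp (t • Ξ)` -/
def M (A B A' : Matrix (Fin n) (Fin n) ℝ) (t : ℝ) :
    Matrix (Fin n ⊕ Fin n) (Fin n ⊕ Fin n) ℝ :=
  Matrix.fromBlocks (exp (t • A)) (exp (t • A) * K A B A' t) 0 (exp (t • A'))

lemma hasDerivAt_M (A B A' : Matrix (Fin n) (Fin n) ℝ) (t : ℝ) :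
    HasDerivAt (M A B A')
      (Matrix.fromBlocks A B 0 A' * M A B A' t) t := by
  have hf : HasDerivAt (fun u : ℝ => exp (u • A)) (A * exp (t • A)) t :=
    hasDerivAt_exp_smul_const' A t
  have hk : HasDerivAt (fun u : ℝ => exp (u • A')) (A' * exp (t • A')) t :=
    hasDerivAt_exp_smul_const' A' t
  have hg : HasDerivAt (fun u : ℝ => exp (u • A) * K A B A' u)
      (A * (exp (t • A) * K A B A' t) + B * exp (t • A')) t := by
    have := hf.mul (hasDerivAt_K A B A' t)
    have he : A * exp (t • A) * K A B A' t + exp (t • A) * F A B A' t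
        = A * (exp (t • A) * K A B A' t) + B * exp (t • A') := by
      rw [mul_assoc]
      congr 1
      rw [F, ← mul_assoc, ← mul_assoc, expNegCancel]
      simp
    rwa [he] at this
  have hu : HasDerivAt
      (fun u : ℝ => ((exp (u • A), (exp (u • A) * K A B A' u, exp (u • A')))
        : Matrix (Fin n) (Fin n) ℝ × (Matrix (Fin n) (Fin n) ℝ × Matrix (Fin n) (Fin n) ℝ)))
      (A * exp (t • A),
        (A * (exp (t • A) * K A B A' t) + B * exp (t • A'), A' * exp (t • A'))) t :=
    hf.prodMk (hg.prodMk hk)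
  have := (LblkC.hasFDerivAt).comp_hasDerivAt t hu
  have hM : (fun u : ℝ => LblkC
      ((exp (u • A), (exp (u • A) * K A B A' u, exp (u • A'))))) = M A B A' := by
    funext u
    simp [LblkC, Lblk, M]
  simp only [Function.comp_def] at this
  rw [hM] at this
  refine this.congr_deriv (Eq.symm ?_)
  change _ = Matrix.fromBlocks (A * exp (t • A))
    (A * (exp (t • A) * K A B A' t) + B * exp (t • A')) 0 (A' * exp (t • A'))
  rw [M, Matrix.fromBlocks_multiply]
  simp [mul_assoc]

lemma exp_eq_M (A B A' : Matrix (Fin n) (Fin n) ℝ) (t : ℝ) :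
    exp (t • Matrix.fromBlocks A B 0 A') = M A B A' t := by
  set Ξ := Matrix.fromBlocks A B 0 A' with hΞ
  have hcomm : ∀ u : ℝ, exp (u • Ξ) * Ξ = Ξ * exp (u • Ξ) := by
    intro u
    exact (((Commute.refl Ξ).smul_left u).exp_left).eq
  have hexp : ∀ u : ℝ, HasDerivAt (fun v : ℝ => exp ((-v) • Ξ))
      (-(Ξ * exp ((-u) • Ξ))) u := by
    intro u
    have h1 : HasDerivAt (fun v : ℝ => exp (v • Ξ)) (Ξ * exp ((-u) • Ξ)) (-u) :=
      hasDerivAt_exp_smul_const' Ξ (-u)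
    have h2 : HasDerivAt (fun v : ℝ => -v) (-1 : ℝ) u := (hasDerivAt_id u).neg
    have := h1.scomp u h2
    simp [Function.comp_def] at this ⊢
    exact this
  set H := fun u : ℝ => exp ((-u) • Ξ) * M A B A' u with hH
  have hH' : ∀ u : ℝ, HasDerivAt H 0 u := by
    intro u
    have := (hexp u).mul (hasDerivAt_M A B A' u)
    have he : -(Ξ * exp ((-u) • Ξ)) * M A B A' u
        + exp ((-u) • Ξ) * (Ξ * M A B A' u) = 0 := by
      rw [← mul_assoc, ← hcomm]
      simp [mul_assoc]
    rwa [he] at this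
  have hconst : H t = H 0 :=
    is_const_of_deriv_eq_zero (fun u => (hH' u).differentiableAt)
      (fun u => (hH' u).deriv) t 0
  have hM0 : M A B A' 0 = 1 := by
    rw [M, K]
    simp [Matrix.fromBlocks_one]
  have hH0 : H 0 = 1 := by
    rw [hH]
    simp [hM0]
  have hHt : exp ((-t) • Ξ) * M A B A' t = 1 := hconst.trans hH0
  have hinv : exp (t • Ξ) * exp ((-t) • Ξ) = 1 := by
    rw [expNegCancel]
    simp
  calc exp (t • Ξ) = exp (t • Ξ) * (exp ((-t) • Ξ) * M A B A' t) := by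
        rw [hHt, mul_one]
    _ = exp (t • Ξ) * exp ((-t) • Ξ) * M A B A' t := by rw [mul_assoc]
    _ = M A B A' t := by rw [hinv, one_mul]

/-- entry map as a continuous linear map -/
def entryCLM (i j : Fin n) : Matrix (Fin n) (Fin n) ℝ →L[ℝ] ℝ :=
  LinearMap.toContinuousLinearMap
    { toFun := fun M => M i j
      map_add' := fun _ _ => rfl
      map_smul' := fun _ _ => rfl }

def mulLeftCLM (X : Matrix (Fin n) (Fin n) ℝ) :
    Matrix (Fin n) (Fin n) ℝ →L[ℝ] Matrix (Fin n) (Fin n) ℝ :=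
  LinearMap.toContinuousLinearMap (LinearMap.mulLeft ℝ X)

lemma block12 (A B A' : Matrix (Fin n) (Fin n) ℝ) (t : ℝ) (i j : Fin n) :
    (exp (t • A) * K A B A' t) i j
      = ∫ s in (0:ℝ)..t, (exp ((t - s) • A) * B * exp (s • A')) i j := by
  have hint : @IntervalIntegrable _ PseudoMetricSpace.toUniformSpace.toTopologicalSpace _ (F A B A') MeasureTheory.volume 0 t :=
    (contF A B A').intervalIntegrable _ _
  have h1 : exp (t • A) * K A B A' t
      = ∫ s in (0:ℝ)..t, exp (t • A) * F A B A' s := by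
    rw [K]
    have := (mulLeftCLM (exp (t • A))).intervalIntegral_comp_comm hint
    exact this.symm
  have h2 : ∀ s : ℝ, exp (t • A) * F A B A' s
      = exp ((t - s) • A) * B * exp (s • A') := by
    intro s
    rw [F, ← mul_assoc, ← mul_assoc, expNegCancel]
    ring_nf
  rw [h1]
  simp_rw [h2]
  have hint2 : @IntervalIntegrable _ PseudoMetricSpace.toUniformSpace.toTopologicalSpace _
      (fun s => exp ((t - s) • A) * B * exp (s • A'))
      MeasureTheory.volume 0 t := by
    have : Continuous fun s : ℝ => exp ((t - s) • A) * B * exp (s • A') :=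
      (((expCont A).comp (continuous_const.sub continuous_id)).mul continuous_const).mul
        (expCont A')
    exact this.intervalIntegrable _ _
  have := (entryCLM i j).intervalIntegral_comp_comm hint2
  exact this.symm

theorem result (A B A' : Matrix (Fin n) (Fin n) ℝ) (t : ℝ) :
    NormedSpace.exp (t • Matrix.fromBlocks A B 0 A') =
      Matrix.fromBlocks (NormedSpace.exp (t • A))
        (fun i j => ∫ s in (0:ℝ)..t,
          (NormedSpace.exp ((t - s) • A) * B * NormedSpace.exp (s • A')) i j)
        0 (NormedSpace.exp (t • A')) := by
  have h12 : exp (t • A) * K A B A' t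
      = fun i j => ∫ s in (0:ℝ)..t, (exp ((t - s) • A) * B * exp (s • A')) i j :=
    funext fun i => funext fun j => block12 A B A' t i j
  rw [exp_eq_M, M, h12]

end

end VanLoanAux

/-- For square matrices `A`, `B`, `A'` of size `n` and `t ≥ 0`, the exponential of the
block upper-triangular matrix `[[A, B], [0, A']]` times `t` is
`[[exp(At), G(t)], [0, exp(A't)]]` where `G(t) = ∫₀ᵗ exp(A(t−s)) B exp(A's) ds`. -/
theorem vanLoan_two_block {n : ℕ} (A B A' : Matrix (Fin n) (Fin n) ℝ) (t : ℝ) (ht : 0 ≤ t) :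
    NormedSpace.exp (t • Matrix.fromBlocks A B 0 A') =
      Matrix.fromBlocks (NormedSpace.exp (t • A))
        (fun i j => ∫ s in (0:ℝ)..t,
          (NormedSpace.exp ((t - s) • A) * B * NormedSpace.exp (s • A')) i j)
        0 (NormedSpace.exp (t • A')) :=
  VanLoanAux.result A B A' t
end

section
/- Define Ξ as the block matrix [[A, L Q Lᵀ], [0, −Aᵀ]] of size 2n×2n. Then exp(Ξ Δt) has block form [[Υ₁₁, Υ₁₂], [0, Υ₂₂]] with Υ₁₁ = exp(A Δt), and Υ₁₂ · Υ₁₁ᵀ = ∫₀^{Δt} exp(A(Δt−s)) · L Q Lᵀ · (exp(A(Δt−s)))ᵀ ds. -/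
open Matrix

open Matrix NormedSpace
section Aux
variable {k : Type*} [Fintype k] [DecidableEq k]
@[reducible] noncomputable def matNR (k : Type*) [Fintype k] [DecidableEq k] : NormedRing (Matrix k k ℝ) :=
  { Matrix.linftyOpNormedRing with toUniformSpace := inferInstance }
attribute [local instance] matNR
@[reducible] noncomputable def matNA (R k : Type*) [NormedField R] [NormedAlgebra R ℝ] [Fintype k]
    [DecidableEq k] : NormedAlgebra R (Matrix k k ℝ) :=
  { Matrix.linftyOpNormedAlgebra with }
attribute [local instance] matNA

noncomputable def entryCLM (i j : k) : Matrix k k ℝ →L[ℝ] ℝ :=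
  LinearMap.toContinuousLinearMap
    { toFun := fun X => X i j
      map_add' := fun _ _ => rfl
      map_smul' := fun _ _ => rfl }

noncomputable def mulLRCLM (C D : Matrix k k ℝ) : Matrix k k ℝ →L[ℝ] Matrix k k ℝ :=
  LinearMap.toContinuousLinearMap
    { toFun := fun X => C * X * D
      map_add' := fun X Y => by noncomm_ring
      map_smul' := fun r X => by simp [Matrix.mul_smul, Matrix.smul_mul] }

noncomputable def fromBlocksCLM (k : Type*) [Fintype k] [DecidableEq k] :
    (Matrix k k ℝ × Matrix k k ℝ × Matrix k k ℝ × Matrix k k ℝ) →L[ℝ]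
      Matrix (k ⊕ k) (k ⊕ k) ℝ :=
  LinearMap.toContinuousLinearMap
    { toFun := fun p => Matrix.fromBlocks p.1 p.2.1 p.2.2.1 p.2.2.2
      map_add' := fun p q => by simp [Matrix.fromBlocks_add]
      map_smul' := fun r p => by simp [Matrix.fromBlocks_smul] }

theorem hasDerivAt_fromBlocks
    {a b c d : ℝ → Matrix k k ℝ} {a' b' c' d' : Matrix k k ℝ} {t : ℝ}
    (ha : HasDerivAt a a' t) (hb : HasDerivAt b b' t) (hc : HasDerivAt c c' t)
    (hd : HasDerivAt d d' t) :
    HasDerivAt (fun t => Matrix.fromBlocks (a t) (b t) (c t) (d t))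
      (Matrix.fromBlocks a' b' c' d') t :=
  ((fromBlocksCLM k).hasFDerivAt.comp_hasDerivAt t (ha.prodMk (hb.prodMk (hc.prodMk hd))))

theorem exp_mul_exp_neg (X : Matrix k k ℝ) : exp X * exp (-X) = 1 := by
  rw [← exp_add_of_commute ((Commute.refl X).neg_right), add_neg_cancel, exp_zero]

theorem exp_smul_mul_exp_smul (X : Matrix k k ℝ) (s t : ℝ) :
    exp (s • X) * exp (t • X) = exp ((s + t) • X) := by
  rw [add_smul, exp_add_of_commute (((Commute.refl X).smul_left s).smul_right t)]

theorem exp_smul_transpose (X : Matrix k k ℝ) (t : ℝ) :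
    (exp (t • X))ᵀ = exp (t • Xᵀ) := by
  rw [← Matrix.transpose_smul, Matrix.exp_transpose]

theorem continuous_exp_smul (X : Matrix k k ℝ) :
    Continuous fun s : ℝ => exp (s • X) :=
  exp_continuous.comp (continuous_id.smul continuous_const)


theorem vanLoanAux {n m : ℕ} (A : Matrix (Fin n) (Fin n) ℝ)
    (L : Matrix (Fin n) (Fin m) ℝ) (Q : Matrix (Fin m) (Fin m) ℝ) (Δt : ℝ) (hΔt : 0 ≤ Δt) :
    ∃ Υ₁₂ Υ₂₂ : Matrix (Fin n) (Fin n) ℝ,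
      exp (Δt • Matrix.fromBlocks A (L * Q * Lᵀ) 0 (-Aᵀ)) =
        Matrix.fromBlocks (exp (Δt • A)) Υ₁₂ 0 Υ₂₂ ∧
      Υ₁₂ * (exp (Δt • A))ᵀ =
        fun i j => ∫ s in (0:ℝ)..Δt,
          (exp ((Δt - s) • A) * (L * Q * Lᵀ) *
            (exp ((Δt - s) • A))ᵀ) i j := by
  set B := L * Q * Lᵀ with hB
  set Ξ := Matrix.fromBlocks A B 0 (-Aᵀ) with hΞ
  set F : ℝ → Matrix (Fin n) (Fin n) ℝ :=
    fun s => exp ((-s) • A) * B * exp ((-s) • Aᵀ) with hF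
  have hFcont : Continuous F := by
    exact (((continuous_exp_smul A).comp continuous_neg).mul continuous_const).mul
      ((continuous_exp_smul Aᵀ).comp continuous_neg)
  set W : ℝ → Matrix (Fin n) (Fin n) ℝ := fun t => ∫ s in (0:ℝ)..t, F s with hW
  have hWd : ∀ t : ℝ, HasDerivAt W (F t) t := fun t =>
    intervalIntegral.integral_hasDerivAt_right (hFcont.intervalIntegrable 0 t)
      (hFcont.stronglyMeasurable.stronglyMeasurableAtFilter) hFcont.continuousAt
  set M : ℝ → Matrix (Fin n ⊕ Fin n) (Fin n ⊕ Fin n) ℝ := fun t =>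
    Matrix.fromBlocks (exp (t • A)) (exp (t • A) * W t) 0 (exp (t • (-Aᵀ))) with hM
  have hMd : ∀ t : ℝ, HasDerivAt M (Ξ * M t) t := by
    intro t
    have ha := hasDerivAt_exp_smul_const' A t
    have hb := ha.mul (hWd t)
    have hd := hasDerivAt_exp_smul_const' (-Aᵀ) t
    have h := hasDerivAt_fromBlocks ha hb
      (hasDerivAt_const t (0 : Matrix (Fin n) (Fin n) ℝ)) hd
    convert h using 1
    · rfl
    rw [hΞ, Matrix.fromBlocks_multiply]
    have he : exp (t • A) * F t = B * exp (t • -Aᵀ) := by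
      show exp (t • A) * (exp (-t • A) * B * exp (-t • Aᵀ)) = _
      rw [smul_neg]
      simp only [neg_smul]
      rw [← mul_assoc, ← mul_assoc, exp_mul_exp_neg, one_mul]
    simp only [Matrix.mul_zero, Matrix.zero_mul, add_zero, zero_add]
    rw [← mul_assoc, he]
  have hKd : ∀ t : ℝ, HasDerivAt (fun t => exp (t • (-Ξ)) * M t) 0 t := by
    intro t
    have hE := hasDerivAt_exp_smul_const (-Ξ) t
    have h := hE.mul (hMd t)
    convert h using 1
    · rfl
    · rfl
    · rfl
    · rfl
    rw [mul_neg, neg_mul, mul_assoc, neg_add_cancel]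
  have hconst : exp (Δt • (-Ξ)) * M Δt = exp ((0:ℝ) • (-Ξ)) * M 0 :=
    is_const_of_deriv_eq_zero (fun t => (hKd t).differentiableAt)
      (fun t => (hKd t).deriv) _ _
  have hM0 : M 0 = 1 := by
    rw [hM]
    simp only [zero_smul, exp_zero, hW, intervalIntegral.integral_same, mul_zero]
    exact Matrix.fromBlocks_one
  have hexp : exp (Δt • (-Ξ)) * M Δt = 1 := by
    rw [hconst, hM0, zero_smul, exp_zero, one_mul]
  have hinv : exp (Δt • Ξ) * exp (Δt • (-Ξ)) = 1 := by
    rw [smul_neg, ← exp_add_of_commute ((Commute.refl (Δt • Ξ)).neg_right), add_neg_cancel,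
      exp_zero]
  have key : exp (Δt • Ξ) = M Δt := by
    calc exp (Δt • Ξ) = exp (Δt • Ξ) * (exp (Δt • (-Ξ)) * M Δt) := by
          rw [hexp, mul_one]
      _ = exp (Δt • Ξ) * exp (Δt • (-Ξ)) * M Δt := by rw [mul_assoc]
      _ = M Δt := by rw [hinv, one_mul]
  refine ⟨exp (Δt • A) * W Δt, exp (Δt • (-Aᵀ)), key, ?_⟩
  rw [exp_smul_transpose]
  have hint : IntervalIntegrable F MeasureTheory.volume 0 Δt := hFcont.intervalIntegrable 0 Δt
  have step1 : exp (Δt • A) * W Δt * exp (Δt • Aᵀ) =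
      ∫ s in (0:ℝ)..Δt, exp ((Δt - s) • A) * B * (exp ((Δt - s) • A))ᵀ := by
    have hcomm := (mulLRCLM (exp (Δt • A)) (exp (Δt • Aᵀ))).intervalIntegral_comp_comm hint
    have : (mulLRCLM (exp (Δt • A)) (exp (Δt • Aᵀ))) (W Δt)
        = exp (Δt • A) * W Δt * exp (Δt • Aᵀ) := rfl
    rw [← this, ← hcomm]
    apply intervalIntegral.integral_congr
    intro s _
    show exp (Δt • A) * F s * exp (Δt • Aᵀ)
        = exp ((Δt - s) • A) * B * (exp ((Δt - s) • A))ᵀ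
    rw [exp_smul_transpose]
    have h1 : exp (Δt • A) * exp ((-s) • A) = exp ((Δt - s) • A) := by
      rw [exp_smul_mul_exp_smul, ← sub_eq_add_neg]
    have h2 : exp ((-s) • Aᵀ) * exp (Δt • Aᵀ) = exp ((Δt - s) • Aᵀ) := by
      rw [exp_smul_mul_exp_smul, neg_add_eq_sub]
    calc exp (Δt • A) * (exp ((-s) • A) * B * exp ((-s) • Aᵀ)) * exp (Δt • Aᵀ)
        = (exp (Δt • A) * exp ((-s) • A)) * B * (exp ((-s) • Aᵀ) * exp (Δt • Aᵀ)) := by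
          noncomm_ring
      _ = exp ((Δt - s) • A) * B * exp ((Δt - s) • Aᵀ) := by rw [h1, h2]
  rw [step1]
  have hcont2 : Continuous fun s : ℝ => exp ((Δt - s) • A) * B * (exp ((Δt - s) • A))ᵀ := by
    have h0 : Continuous fun s : ℝ => exp ((Δt - s) • A) :=
      (continuous_exp_smul A).comp (continuous_const.sub continuous_id)
    exact (h0.mul continuous_const).mul h0.matrix_transpose
  have hint2 : IntervalIntegrable
      (fun s : ℝ => exp ((Δt - s) • A) * B * (exp ((Δt - s) • A))ᵀ)
      MeasureTheory.volume 0 Δt := hcont2.intervalIntegrable 0 Δt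
  funext i j
  exact ((entryCLM i j).intervalIntegral_comp_comm hint2).symm

end Aux


/-- Van Loan's method for `Q^d`: with `Ξ = [[A, LQLᵀ], [0, −Aᵀ]]`, the exponential
`exp(Ξ Δt)` has block form `[[Υ₁₁, Υ₁₂], [0, Υ₂₂]]` with `Υ₁₁ = exp(A Δt)` and
`Υ₁₂ Υ₁₁ᵀ = ∫₀^{Δt} exp(A(Δt−s)) L Q Lᵀ (exp(A(Δt−s)))ᵀ ds`. -/
theorem vanLoan_Qd {n m : ℕ} (A : Matrix (Fin n) (Fin n) ℝ)
    (L : Matrix (Fin n) (Fin m) ℝ) (Q : Matrix (Fin m) (Fin m) ℝ) (Δt : ℝ) (hΔt : 0 ≤ Δt) :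
    ∃ Υ₁₂ Υ₂₂ : Matrix (Fin n) (Fin n) ℝ,
      NormedSpace.exp (Δt • Matrix.fromBlocks A (L * Q * Lᵀ) 0 (-Aᵀ)) =
        Matrix.fromBlocks (NormedSpace.exp (Δt • A)) Υ₁₂ 0 Υ₂₂ ∧
      Υ₁₂ * (NormedSpace.exp (Δt • A))ᵀ =
        fun i j => ∫ s in (0:ℝ)..Δt,
          (NormedSpace.exp ((Δt - s) • A) * (L * Q * Lᵀ) *
            (NormedSpace.exp ((Δt - s) • A))ᵀ) i j := by
  exact vanLoanAux A L Q Δt hΔt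
end

section
/- If A₂ = −A₁ᵀ in a block upper triangular matrix Ξ = [[A₁, B₁],[0, −A₁ᵀ]] with B₁ symmetric, then the matrix P(t) = Υ₁₂(t) Υ₁₁(t)ᵀ is symmetric for all t, where Υ₁₁(t) and Υ₁₂(t) are the top blocks of exp(Ξt). -/
open Matrix

attribute [local instance] Matrix.linftyOpNormedRing Matrix.linftyOpNormedAlgebra

/-- If `Ξ = [[A₁, B₁], [0, −A₁ᵀ]]` with `B₁` symmetric, then
`P(t) = Υ₁₂(t) Υ₁₁(t)ᵀ` is symmetric for all `t`, where `Υ₁₁(t) = exp(A₁ t)` and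
`Υ₁₂(t) = ∫₀ᵗ exp(A₁(t−s)) B₁ exp(−A₁ᵀ s) ds`. -/
theorem vanLoan_P_symm {n : ℕ} (A₁ B₁ : Matrix (Fin n) (Fin n) ℝ) (hB₁ : B₁.IsSymm) (t : ℝ) :
    Matrix.IsSymm
      ((Matrix.of fun i j => ∫ s in (0:ℝ)..t,
          (NormedSpace.exp ((t - s) • A₁) * B₁ * NormedSpace.exp (-(s • A₁ᵀ))) i j) * (NormedSpace.exp (t • A₁))ᵀ) := by
  set F : ℝ → Matrix (Fin n) (Fin n) ℝ := fun s =>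
    NormedSpace.exp ((t - s) • A₁) * B₁ * NormedSpace.exp (-(s • A₁ᵀ)) with hF
  set E := NormedSpace.exp (t • A₁) with hE
  have hFcont : Continuous F := by
    apply Continuous.mul
    · exact (NormedSpace.exp_continuous.comp ((continuous_sub_left t).smul continuous_const)).mul
        continuous_const
    · exact NormedSpace.exp_continuous.comp ((continuous_id.smul continuous_const).neg)
  have hcont : ∀ i j : Fin n, Continuous fun s => F s i j := by
    intro i j
    exact ((continuous_apply j).comp (continuous_apply i)).comp hFcont
  have hint : ∀ i j : Fin n, IntervalIntegrable (fun s => F s i j)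
      MeasureTheory.volume 0 t := fun i j => (hcont i j).intervalIntegrable 0 t
  have hent : ∀ i j : Fin n,
      ((Matrix.of fun i j => ∫ s in (0:ℝ)..t, F s i j) * Eᵀ) i j
        = ∫ s in (0:ℝ)..t, (F s * Eᵀ) i j := by
    intro i j
    simp only [mul_apply, of_apply]
    rw [intervalIntegral.integral_finset_sum (fun k _ => (hint i k).mul_const (Eᵀ k j))]
    simp only [intervalIntegral.integral_mul_const]
  have key : ∀ s : ℝ, F s * Eᵀ =
      NormedSpace.exp ((t - s) • A₁) * B₁ * (NormedSpace.exp ((t - s) • A₁))ᵀ := by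
    intro s
    have hc : Commute (-(s • A₁ᵀ)) (t • A₁ᵀ) :=
      (((Commute.refl A₁ᵀ).smul_left s).smul_right t).neg_left
    have h1 : Eᵀ = NormedSpace.exp (t • A₁ᵀ) := by
      rw [hE, ← Matrix.exp_transpose, Matrix.transpose_smul]
    have h2 : NormedSpace.exp (-(s • A₁ᵀ)) * NormedSpace.exp (t • A₁ᵀ)
        = NormedSpace.exp ((t - s) • A₁ᵀ) := by
      refine (NormedSpace.exp_add_of_commute hc).symm.trans ?_
      congr 1
      rw [sub_smul]
      abel
    have h3 : NormedSpace.exp ((t - s) • A₁ᵀ) = (NormedSpace.exp ((t - s) • A₁))ᵀ := by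
      rw [← Matrix.transpose_smul, Matrix.exp_transpose]
    rw [h1, hF]
    simp only [mul_assoc, h2, h3]
  rw [Matrix.IsSymm]
  ext i j
  rw [Matrix.transpose_apply, hent, hent]
  apply intervalIntegral.integral_congr
  intro s _
  show (F s * Eᵀ) j i = (F s * Eᵀ) i j
  rw [key]
  have hBs : B₁ᵀ = B₁ := hB₁
  calc (NormedSpace.exp ((t - s) • A₁) * B₁ * (NormedSpace.exp ((t - s) • A₁))ᵀ) j i
      = ((NormedSpace.exp ((t - s) • A₁) * B₁ * (NormedSpace.exp ((t - s) • A₁))ᵀ)ᵀ) i j := rfl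
    _ = _ := by rw [Matrix.transpose_mul, Matrix.transpose_mul, Matrix.transpose_transpose, hBs, mul_assoc]
end
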